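/- Let 0 ≤ α < π/2 and let H be an nk×nk complex matrix, viewed as an n×n block matrix with k×k blocks, whose numerical range is contained in the sector S_α = {z ∈ ℂ : Re z > 0, |Im z| ≤ (Re z)·tan α}. Then |det(tr₁H)/n^k|^n ≥ (cos α)^{nk} |det H|, where tr₁H = Σᵢ H_{i,i}. -/

import Mathlib

open Matrix BigOperators ComplexOrder

/-- First partial trace: sum of the diagonal blocks. -/
noncomputable def ptrace1 {n k : ℕ} (H : Matrix (Fin n × Fin k) (Fin n × Fin k) ℂ) :
    Matrix (Fin k) (Fin k) ℂ :=
  Matrix.of fun l m => ∑ i : Fin n, H (i, l) (i, m)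

/-- The sector S_α in the complex plane. -/
noncomputable def sector (α : ℝ) : Set ℂ := {z | 0 < z.re ∧ |z.im| ≤ z.re * Real.tan α}

/-- Numerical range of a complex matrix. -/
noncomputable def numRange {I : Type*} [Fintype I] (A : Matrix I I ℂ) : Set ℂ :=
  {z | ∃ x : I → ℂ, star x ⬝ᵥ x = 1 ∧ star x ⬝ᵥ (A *ᵥ x) = z}

set_option linter.unusedSectionVars false
set_option linter.unusedVariables false

variable {m : Type*} [Fintype m] [DecidableEq m]

noncomputable def ReM (A : Matrix m m ℂ) : Matrix m m ℂ := (1/2 : ℂ) • (A + Aᴴ)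
noncomputable def ImM (A : Matrix m m ℂ) : Matrix m m ℂ := (-(Complex.I)/2 : ℂ) • (A - Aᴴ)

lemma ReM_isHermitian (A : Matrix m m ℂ) : (ReM A).IsHermitian := by
  unfold ReM
  rw [IsHermitian, conjTranspose_smul, conjTranspose_add, conjTranspose_conjTranspose, add_comm]
  congr 1
  simp [Complex.ext_iff]

lemma ImM_isHermitian (A : Matrix m m ℂ) : (ImM A).IsHermitian := by
  unfold ImM
  rw [IsHermitian, conjTranspose_smul, conjTranspose_sub, conjTranspose_conjTranspose]
  ext i j
  simp only [Matrix.smul_apply, Matrix.sub_apply, smul_eq_mul]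
  have h : star (-Complex.I / 2) = Complex.I / 2 := by simp [Complex.ext_iff]
  rw [h]
  ring

lemma ReM_add_I_smul_ImM (A : Matrix m m ℂ) : ReM A + Complex.I • ImM A = A := by
  unfold ReM ImM
  rw [smul_smul]
  have h : Complex.I * (-Complex.I / 2) = 1/2 := by
    simp [Complex.ext_iff]
    norm_num
  rw [h]
  ext i j
  simp only [Matrix.add_apply, Matrix.smul_apply, Matrix.sub_apply, smul_eq_mul, conjTranspose_apply]
  ring

lemma dot_conjTranspose (A : Matrix m m ℂ) (x : m → ℂ) :
    star x ⬝ᵥ (Aᴴ *ᵥ x) = star (star x ⬝ᵥ (A *ᵥ x)) := by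
  rw [dotProduct_mulVec, star_dotProduct, ← star_mulVec, star_star, dotProduct_comm]

lemma dot_ReM (A : Matrix m m ℂ) (x : m → ℂ) :
    star x ⬝ᵥ (ReM A *ᵥ x) = ((star x ⬝ᵥ (A *ᵥ x)).re : ℂ) := by
  unfold ReM
  rw [smul_mulVec, dotProduct_smul, add_mulVec, dotProduct_add, dot_conjTranspose]
  set z := star x ⬝ᵥ (A *ᵥ x)
  simp [Complex.ext_iff]
  ring

lemma dot_ImM (A : Matrix m m ℂ) (x : m → ℂ) :
    star x ⬝ᵥ (ImM A *ᵥ x) = ((star x ⬝ᵥ (A *ᵥ x)).im : ℂ) := by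
  unfold ImM
  rw [smul_mulVec, dotProduct_smul, sub_mulVec, dotProduct_sub, dot_conjTranspose]
  set z := star x ⬝ᵥ (A *ᵥ x)
  simp [Complex.ext_iff]
  ring

lemma posDef_ReM (A : Matrix m m ℂ)
    (h : ∀ x : m → ℂ, x ≠ 0 → 0 < (star x ⬝ᵥ (A *ᵥ x)).re) : (ReM A).PosDef := by
  refine PosDef.of_dotProduct_mulVec_pos (ReM_isHermitian A) fun x hx => ?_
  rw [dot_ReM]
  exact Complex.zero_lt_real.mpr (h x hx)

-- helper: congruence of quadratic forms by Hermitian N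
lemma dot_conj_herm {N M : Matrix m m ℂ} (hN : N.IsHermitian) (v : m → ℂ) :
    star (N *ᵥ v) ⬝ᵥ (M *ᵥ (N *ᵥ v)) = star v ⬝ᵥ ((N * M * N) *ᵥ v) := by
  rw [star_mulVec, hN.eq, dotProduct_mulVec, vecMul_vecMul, ← dotProduct_mulVec,
    mulVec_mulVec, Matrix.mul_assoc]

noncomputable def Matrix.PosSemidef.sqrt {A : Matrix m m ℂ} (hA : A.PosSemidef) : Matrix m m ℂ :=
  (hA.1.eigenvectorUnitary : Matrix m m ℂ) *
    diagonal (fun i => ((Real.sqrt (hA.1.eigenvalues i) : ℝ) : ℂ)) *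
      star (hA.1.eigenvectorUnitary : Matrix m m ℂ)

lemma Matrix.PosSemidef.posSemidef_sqrt {A : Matrix m m ℂ} (hA : A.PosSemidef) :
    hA.sqrt.PosSemidef :=
  (PosSemidef.diagonal (fun i => Complex.zero_le_real.mpr (Real.sqrt_nonneg _))).mul_mul_conjTranspose_same
    (hA.1.eigenvectorUnitary : Matrix m m ℂ)

lemma Matrix.PosSemidef.sqrt_mul_self {A : Matrix m m ℂ} (hA : A.PosSemidef) :
    hA.sqrt * hA.sqrt = A := by
  unfold Matrix.PosSemidef.sqrt
  have hU : star (hA.1.eigenvectorUnitary : Matrix m m ℂ) * (hA.1.eigenvectorUnitary : Matrix m m ℂ)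
      = 1 := Unitary.coe_star_mul_self _
  have hd : diagonal (fun i => ((Real.sqrt (hA.1.eigenvalues i) : ℝ) : ℂ)) *
      diagonal (fun i => ((Real.sqrt (hA.1.eigenvalues i) : ℝ) : ℂ)) =
      diagonal (RCLike.ofReal ∘ hA.1.eigenvalues) := by
    rw [diagonal_mul_diagonal]
    congr 1
    funext i
    simp only [Function.comp_apply]
    rw [← Complex.ofReal_mul, Real.mul_self_sqrt (hA.eigenvalues_nonneg i)]
    rfl
  conv_rhs => rw [hA.1.spectral_theorem, Unitary.conjStarAlgAut_apply]
  calc _ = (hA.1.eigenvectorUnitary : Matrix m m ℂ) *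
        (diagonal (fun i => ((Real.sqrt (hA.1.eigenvalues i) : ℝ) : ℂ)) *
          (star (hA.1.eigenvectorUnitary : Matrix m m ℂ) * (hA.1.eigenvectorUnitary : Matrix m m ℂ)) *
            diagonal (fun i => ((Real.sqrt (hA.1.eigenvalues i) : ℝ) : ℂ))) *
              star (hA.1.eigenvectorUnitary : Matrix m m ℂ) := by simp only [Matrix.mul_assoc]
    _ = _ := by rw [hU, Matrix.mul_one, hd]

lemma sqrt_isUnit_det {R : Matrix m m ℂ} (hR : R.PosDef) :
    IsUnit (PosSemidef.sqrt hR.posSemidef).det := by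
  have h2 : (PosSemidef.sqrt hR.posSemidef) * (PosSemidef.sqrt hR.posSemidef) = R := PosSemidef.sqrt_mul_self hR.posSemidef
  have : (PosSemidef.sqrt hR.posSemidef).det * (PosSemidef.sqrt hR.posSemidef).det = R.det := by
    rw [← det_mul, h2]
  have hd := hR.det_pos.ne'
  apply isUnit_of_mul_isUnit_left (y := (PosSemidef.sqrt hR.posSemidef).det)
  rw [this]
  exact (Ne.isUnit (by exact_mod_cast fun hh => hd hh))

-- positivity of congruence
lemma posDef_conj {M N : Matrix m m ℂ} (hM : M.PosDef) (hNdet : IsUnit N.det)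
    (hN : N.IsHermitian) : (N * M * N).PosDef := by
  refine PosDef.of_dotProduct_mulVec_pos (by rw [IsHermitian, conjTranspose_mul, conjTranspose_mul, hN.eq, hM.1.eq, mul_assoc]) ?_
  intro x hx
  have hy : N *ᵥ x ≠ 0 := by
    intro h0
    apply hx
    have := congrArg (fun v => N⁻¹ *ᵥ v) h0
    simpa [mulVec_mulVec, Matrix.nonsing_inv_mul _ hNdet] using this
  have := hM.dotProduct_mulVec_pos hy
  rwa [dot_conj_herm hN] at this

lemma abs_one_add_mul_I (c : ℝ) :
    ‖(1 + (c:ℂ) * Complex.I)‖ = Real.sqrt (1 + c ^ 2) := by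
  rw [Complex.norm_def]
  congr 1
  simp [Complex.normSq_apply]
  ring

lemma decomp (A : Matrix m m ℂ) (hR : (ReM A).PosDef) :
    ∃ μ : m → ℝ,
      ‖A.det‖ = (∏ j, Real.sqrt (1 + μ j ^ 2)) * ‖(ReM A).det‖ ∧
      ∀ j, ∃ x : m → ℂ, x ≠ 0 ∧ ∃ c : ℝ, 0 < c ∧
        star x ⬝ᵥ (A *ᵥ x) = (c : ℂ) * (1 + (μ j : ℂ) * Complex.I) := by
  classical
  set R := ReM A with hRdef
  set S := ImM A with hSdef
  set Q := (PosSemidef.sqrt hR.posSemidef) with hQdef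
  have hQH : Q.IsHermitian := (PosSemidef.posSemidef_sqrt hR.posSemidef).1
  have hQ2 : Q * Q = R := PosSemidef.sqrt_mul_self hR.posSemidef
  have hQdet : IsUnit Q.det := sqrt_isUnit_det hR
  have hQmulinv : Q * Q⁻¹ = 1 := mul_nonsing_inv _ hQdet
  have hQinvmul : Q⁻¹ * Q = 1 := nonsing_inv_mul _ hQdet
  have hQIH : Q⁻¹.IsHermitian := hQH.inv
  set T := Q⁻¹ * S * Q⁻¹ with hTdef
  have hSh : S.IsHermitian := ImM_isHermitian A
  have hT : T.IsHermitian := by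
    rw [IsHermitian, hTdef, conjTranspose_mul, conjTranspose_mul, hQIH.eq, hSh.eq, mul_assoc]
  set μ := hT.eigenvalues with hμdef
  refine ⟨μ, ?_, ?_⟩
  · -- determinant identity
    have hQTQ : Q * T * Q = S := by
      rw [hTdef]
      calc Q * (Q⁻¹ * S * Q⁻¹) * Q = (Q * Q⁻¹) * S * (Q⁻¹ * Q) := by
            simp only [Matrix.mul_assoc]
        _ = S := by rw [hQmulinv, hQinvmul, Matrix.one_mul, Matrix.mul_one]
    have hAeq : A = Q * (1 + Complex.I • T) * Q := by
      have : Q * (1 + Complex.I • T) * Q = Q * Q + Complex.I • (Q * T * Q) := by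
        rw [Matrix.mul_add, Matrix.mul_one, Matrix.add_mul, Matrix.mul_smul, Matrix.smul_mul]
      rw [this, hQ2, hQTQ, hRdef, hSdef, ReM_add_I_smul_ImM]
    set U : Matrix m m ℂ := (hT.eigenvectorUnitary : Matrix m m ℂ) with hUdef
    have hUU : U * star U = 1 := (Matrix.mem_unitaryGroup_iff).mp hT.eigenvectorUnitary.2
    have hdiag : (1 : Matrix m m ℂ) + Complex.I • diagonal (RCLike.ofReal ∘ μ) =
        diagonal (fun j => 1 + (μ j : ℂ) * Complex.I) := by
      ext i j'
      by_cases h : i = j'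
      · subst h
        simp [Matrix.diagonal_apply_eq, Matrix.one_apply_eq, mul_comm]
      · simp [Matrix.diagonal_apply_ne _ h, Matrix.one_apply_ne h]
    have hspec := hT.spectral_theorem
    rw [Unitary.conjStarAlgAut_apply] at hspec
    have hIT : (1 : Matrix m m ℂ) + Complex.I • T
        = U * diagonal (fun j => 1 + (μ j : ℂ) * Complex.I) * star U := by
      rw [← hdiag, Matrix.mul_add, Matrix.add_mul, Matrix.mul_one, hUU,
        Matrix.mul_smul, Matrix.smul_mul]
      congr 1
      rw [← hspec]
    have hUU' : star U * U = 1 := (Matrix.mem_unitaryGroup_iff').mp hT.eigenvectorUnitary.2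
    have hdetIT : (1 + Complex.I • T).det = ∏ j, (1 + (μ j : ℂ) * Complex.I) := by
      rw [hIT, det_mul, det_mul, mul_comm, ← mul_assoc, ← det_mul, hUU', det_one, one_mul,
        det_diagonal]
    have hdetA : A.det = (∏ j, (1 + (μ j : ℂ) * Complex.I)) * R.det := by
      rw [hAeq, det_mul, det_mul, hdetIT]
      rw [← hQ2, det_mul]
      ring
    rw [hdetA, norm_mul, norm_prod]
    congr 1
    exact Finset.prod_congr rfl fun j _ => abs_one_add_mul_I (μ j)
  · -- eigenvector witnesses
    intro j
    set v : m → ℂ := ⇑(hT.eigenvectorBasis j) with hvdef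
    have hv : T *ᵥ v = μ j • v := hT.mulVec_eigenvectorBasis j
    have hvne : v ≠ 0 := by
      intro h0
      apply hT.eigenvectorBasis.orthonormal.ne_zero j
      ext i
      exact congrFun h0 i
    refine ⟨Q⁻¹ *ᵥ v, ?_, ?_⟩
    · intro h0
      apply hvne
      have := congrArg (fun w => Q *ᵥ w) h0
      simpa [mulVec_mulVec, hQmulinv] using this
    · set x := Q⁻¹ *ᵥ v with hxdef
      have hQRQ : Q⁻¹ * R * Q⁻¹ = 1 := by
        rw [← hQ2]
        calc Q⁻¹ * (Q * Q) * Q⁻¹ = (Q⁻¹ * Q) * (Q * Q⁻¹) := by simp only [Matrix.mul_assoc]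
          _ = 1 := by rw [hQinvmul, hQmulinv, Matrix.one_mul]
      have hdotR : star x ⬝ᵥ (R *ᵥ x) = star v ⬝ᵥ v := by
        rw [hxdef, dot_conj_herm hQIH, hQRQ, one_mulVec]
      have hdotS : star x ⬝ᵥ (S *ᵥ x) = (μ j : ℂ) * (star v ⬝ᵥ v) := by
        rw [hxdef, dot_conj_herm hQIH, ← hTdef, hv, dotProduct_smul]
        simp [smul_eq_mul, Complex.real_smul]
      set w := star v ⬝ᵥ v with hwdef
      have hw0 : 0 ≤ w := dotProduct_star_self_nonneg v
      have hwne : w ≠ 0 := fun h => hvne (dotProduct_star_self_eq_zero.mp h)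
      have hwim : w.im = 0 := by
        rcases (Complex.le_def.mp hw0) with ⟨_, h2⟩
        simpa using h2.symm
      have hwre : 0 < w.re := by
        rcases (Complex.le_def.mp hw0) with ⟨h1, _⟩
        rcases lt_or_eq_of_le (by simpa using h1) with h | h
        · exact h
        · exact absurd (Complex.ext h.symm hwim) hwne
      refine ⟨w.re, hwre, ?_⟩
      have hAx : star x ⬝ᵥ (A *ᵥ x)
          = star x ⬝ᵥ (R *ᵥ x) + Complex.I * (star x ⬝ᵥ (S *ᵥ x)) := by
        conv_lhs => rw [← ReM_add_I_smul_ImM A]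
        rw [add_mulVec, dotProduct_add, smul_mulVec, dotProduct_smul]
        rfl
      rw [hAx, hdotR, hdotS]
      simp only [Complex.ext_iff, Complex.add_re, Complex.add_im, Complex.mul_re, Complex.mul_im,
        Complex.I_re, Complex.I_im, Complex.ofReal_re, Complex.ofReal_im, Complex.one_re,
        Complex.one_im, hwim]
      constructor <;> ring

lemma trace_eq_sum_eigenvalues {A : Matrix m m ℂ} (hA : A.IsHermitian) :
    A.trace = ∑ j, (hA.eigenvalues j : ℂ) := by
  conv_lhs => rw [hA.spectral_theorem, Unitary.conjStarAlgAut_apply]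
  rw [trace_mul_cycle]
  have hUU' : star (hA.eigenvectorUnitary : Matrix m m ℂ) * (hA.eigenvectorUnitary : Matrix m m ℂ)
      = 1 := (Matrix.mem_unitaryGroup_iff').mp hA.eigenvectorUnitary.2
  rw [hUU', Matrix.one_mul, trace_diagonal]
  rfl

lemma det_le_exp_trace {X : Matrix m m ℂ} (hX : X.PosDef) :
    (X.det).re ≤ Real.exp ((X.trace).re - Fintype.card m) := by
  have hdet : (X.det).re = ∏ j, hX.1.eigenvalues j := by
    have h : X.det = ((∏ j, hX.1.eigenvalues j : ℝ) : ℂ) := by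
      rw [hX.1.det_eq_prod_eigenvalues]; push_cast; rfl
    rw [h, Complex.ofReal_re]
  have htr : (X.trace).re = ∑ j, hX.1.eigenvalues j := by
    have h : X.trace = ((∑ j, hX.1.eigenvalues j : ℝ) : ℂ) := by
      rw [trace_eq_sum_eigenvalues hX.1]; push_cast; rfl
    rw [h, Complex.ofReal_re]
  rw [hdet, htr]
  have h1 : ∀ j ∈ Finset.univ, hX.1.eigenvalues j ≤ Real.exp (hX.1.eigenvalues j - 1) := by
    intro j _
    have := Real.add_one_le_exp (hX.1.eigenvalues j - 1)
    linarith
  calc ∏ j, hX.1.eigenvalues j ≤ ∏ j, Real.exp (hX.1.eigenvalues j - 1) :=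
        Finset.prod_le_prod (fun j _ => (hX.eigenvalues_pos j).le) h1
    _ = Real.exp (∑ j, (hX.1.eigenvalues j - 1)) := (Real.exp_sum _ _).symm
    _ = Real.exp ((∑ j, hX.1.eigenvalues j) - Fintype.card m) := by
        rw [Finset.sum_sub_distrib]
        simp [Finset.card_univ]

open Kronecker

lemma ReM_ptrace1 {n k : ℕ} (H : Matrix (Fin n × Fin k) (Fin n × Fin k) ℂ) :
    ReM (ptrace1 H) = ptrace1 (ReM H) := by
  ext l m'
  simp only [ReM, ptrace1, Matrix.smul_apply, Matrix.add_apply, conjTranspose_apply, of_apply, smul_eq_mul]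
  rw [star_sum, ← Finset.sum_add_distrib, Finset.mul_sum]

lemma ptrace1_posDef {n k : ℕ} (hn : 0 < n) {R : Matrix (Fin n × Fin k) (Fin n × Fin k) ℂ}
    (hR : R.PosDef) : (ptrace1 R).PosDef := by
  refine PosDef.of_dotProduct_mulVec_pos ?_ ?_
  · ext l m'
    simp only [ptrace1, conjTranspose_apply, of_apply, map_sum]
    rw [star_sum]
    exact Finset.sum_congr rfl fun i _ => congrFun (congrFun hR.1 (i, l)) (i, m')
  · intro x hx
    set y : Fin n → (Fin n × Fin k → ℂ) := fun i => fun p => if p.1 = i then x p.2 else 0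
      with hy
    set f : Fin n → Fin k → Fin k → ℂ :=
      fun i l m' => star (x l) * (R (i,l) (i,m') * x m') with hf
    have key1 : star x ⬝ᵥ (ptrace1 R *ᵥ x) = ∑ i, ∑ l, ∑ m', f i l m' := by
      simp only [dotProduct, mulVec, ptrace1, of_apply, Pi.star_apply, hf,
        Finset.sum_mul, Finset.mul_sum]
      calc (∑ l, ∑ m', ∑ i, star (x l) * (R (i,l) (i,m') * x m'))
          = ∑ l, ∑ i, ∑ m', star (x l) * (R (i,l) (i,m') * x m') :=
            Finset.sum_congr rfl fun l _ => Finset.sum_comm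
        _ = ∑ i, ∑ l, ∑ m', star (x l) * (R (i,l) (i,m') * x m') := Finset.sum_comm
    have key2 : ∀ i, star (y i) ⬝ᵥ (R *ᵥ y i) = ∑ l, ∑ m', f i l m' := by
      intro i
      simp only [dotProduct, mulVec, Pi.star_apply, hy, hf, Fintype.sum_prod_type,
        apply_ite (star : ℂ → ℂ), star_zero, ite_mul, zero_mul, mul_ite, mul_zero,
        Finset.sum_ite_irrel, Finset.sum_ite_eq', Finset.mem_univ, if_true,
        Finset.sum_const_zero, Finset.mul_sum]
    have key : star x ⬝ᵥ (ptrace1 R *ᵥ x) = ∑ i, star (y i) ⬝ᵥ (R *ᵥ y i) := by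
      rw [key1]
      exact (Finset.sum_congr rfl fun i _ => (key2 i)).symm
    rw [key]
    have hpos : ∀ i, 0 < star (y i) ⬝ᵥ (R *ᵥ y i) := by
      intro i
      apply hR.dotProduct_mulVec_pos
      intro h0
      apply hx
      ext l
      have := congrFun h0 (i, l)
      simpa [hy] using this
    exact Finset.sum_pos (fun i _ => hpos i) ⟨⟨0, hn⟩, Finset.mem_univ _⟩

lemma posDef_isUnit_det {j : Type*} [Fintype j] [DecidableEq j] {C : Matrix j j ℂ}
    (hC : C.PosDef) : IsUnit C.det :=
  isUnit_iff_ne_zero.mpr (by exact_mod_cast hC.det_pos.ne')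

lemma posDef_det_re {j : Type*} [Fintype j] [DecidableEq j] {C : Matrix j j ℂ}
    (hC : C.PosDef) : 0 < C.det.re ∧ C.det = (C.det.re : ℂ) := by
  have h := hC.det_pos
  rw [Complex.lt_def] at h
  obtain ⟨h1, h2⟩ := h
  refine ⟨by simpa using h1, Complex.ext rfl ?_⟩
  simpa using h2.symm

lemma posDef_real_smul {j : Type*} [Fintype j] [DecidableEq j] {C : Matrix j j ℂ}
    {r : ℝ} (hr : 0 < r) (hC : C.PosDef) : (((r : ℂ)) • C).PosDef := by
  refine PosDef.of_dotProduct_mulVec_pos ?_ ?_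
  · rw [IsHermitian, conjTranspose_smul, hC.1.eq]
    congr 1
    simp [Complex.ext_iff]
  · intro x hx
    rw [smul_mulVec, dotProduct_smul, smul_eq_mul]
    exact mul_pos (Complex.zero_lt_real.mpr hr) (hC.dotProduct_mulVec_pos hx)

lemma kron_posDef {n k : ℕ} (hn : 0 < n) {B : Matrix (Fin k) (Fin k) ℂ} (hB : B.PosDef) :
    ((1 : Matrix (Fin n) (Fin n) ℂ) ⊗ₖ B).PosDef := by
  refine PosDef.of_dotProduct_mulVec_pos ?_ ?_
  · ext ⟨i, l⟩ ⟨j, m'⟩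
    simp only [conjTranspose_apply, kroneckerMap_apply, one_apply, star_mul', apply_ite (star : ℂ → ℂ),
      star_one, star_zero]
    by_cases h : i = j
    · subst h
      simp only [if_true, one_mul]
      exact congrFun (congrFun hB.1 l) m'
    · simp [h, Ne.symm h]
  · intro x hx
    set f : Fin n → Fin k → Fin k → ℂ :=
      fun i l m' => star (x (i, l)) * (B l m' * x (i, m')) with hf
    set xi : Fin n → (Fin k → ℂ) := fun i l => x (i, l) with hxi
    have key1 : star x ⬝ᵥ (((1 : Matrix (Fin n) (Fin n) ℂ) ⊗ₖ B) *ᵥ x)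
        = ∑ i, ∑ l, ∑ m', f i l m' := by
      simp only [dotProduct, mulVec, kroneckerMap_apply, one_apply, Pi.star_apply, hf,
        Fintype.sum_prod_type, ite_mul, zero_mul, one_mul, Finset.sum_ite_irrel,
        Finset.sum_ite_eq, Finset.mem_univ, if_true, Finset.sum_const_zero, Finset.mul_sum]
    have key2 : ∀ i, star (xi i) ⬝ᵥ (B *ᵥ xi i) = ∑ l, ∑ m', f i l m' := by
      intro i
      simp only [dotProduct, mulVec, Pi.star_apply, hxi, hf, Finset.mul_sum]
    have hnonneg : ∀ i ∈ Finset.univ, 0 ≤ star (xi i) ⬝ᵥ (B *ᵥ xi i) :=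
      fun i _ => hB.posSemidef.dotProduct_mulVec_nonneg (xi i)
    have hex : ∃ i ∈ Finset.univ, 0 < star (xi i) ⬝ᵥ (B *ᵥ xi i) := by
      have : ∃ i, xi i ≠ 0 := by
        by_contra hcon
        push_neg at hcon
        apply hx
        ext ⟨i, l⟩
        exact congrFun (hcon i) l
      obtain ⟨i, hi⟩ := this
      exact ⟨i, Finset.mem_univ _, hB.dotProduct_mulVec_pos hi⟩
    rw [key1]
    have := Finset.sum_pos' hnonneg hex
    calc (0:ℂ) < ∑ i, star (xi i) ⬝ᵥ (B *ᵥ xi i) := this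
      _ = ∑ i, ∑ l, ∑ m', f i l m' := Finset.sum_congr rfl fun i _ => key2 i

lemma trace_kron_mul {n k : ℕ} (M : Matrix (Fin k) (Fin k) ℂ)
    (R : Matrix (Fin n × Fin k) (Fin n × Fin k) ℂ) :
    (((1 : Matrix (Fin n) (Fin n) ℂ) ⊗ₖ M) * R).trace = (M * ptrace1 R).trace := by
  simp only [trace, diag, mul_apply, kroneckerMap_apply, one_apply, ptrace1, of_apply,
    Fintype.sum_prod_type, ite_mul, zero_mul, one_mul, Finset.sum_ite_irrel,
    Finset.sum_ite_eq, Finset.mem_univ, if_true, Finset.sum_const_zero, Finset.mul_sum]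
  rw [Finset.sum_comm]
  refine Finset.sum_congr rfl fun l _ => ?_
  rw [Finset.sum_comm]

lemma step3 {n k : ℕ} (hn : 0 < n) {R : Matrix (Fin n × Fin k) (Fin n × Fin k) ℂ}
    (hR : R.PosDef) :
    R.det.re ≤ ((ptrace1 R).det.re / (n : ℝ) ^ k) ^ n := by
  classical
  set C := ptrace1 R with hCdef
  have hC : C.PosDef := ptrace1_posDef hn hR
  obtain ⟨hc₀, hCdet⟩ := posDef_det_re hC
  set c₀ := C.det.re
  have hCdetU : IsUnit C.det := posDef_isUnit_det hC
  have hnR : (0:ℝ) < (n:ℝ) := by exact_mod_cast hn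
  set r : ℝ := ((n:ℝ))⁻¹ with hrdef
  have hr : 0 < r := inv_pos.mpr hnR
  set B := ((r:ℂ)) • C with hBdef
  have hB : B.PosDef := posDef_real_smul hr hC
  have hBdetU : IsUnit B.det := posDef_isUnit_det hB
  set D := (1 : Matrix (Fin n) (Fin n) ℂ) ⊗ₖ B with hDdef
  have hD : D.PosDef := kron_posDef hn hB
  set Q := (PosSemidef.sqrt hD.posSemidef) with hQdef
  have hQH : Q.IsHermitian := (PosSemidef.posSemidef_sqrt hD.posSemidef).1
  have hQ2 : Q * Q = D := PosSemidef.sqrt_mul_self hD.posSemidef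
  have hQdet : IsUnit Q.det := sqrt_isUnit_det hD
  have hQIH : Q⁻¹.IsHermitian := hQH.inv
  have hQinvdet : IsUnit Q⁻¹.det := (Matrix.isUnit_nonsing_inv_det _ hQdet)
  set X := Q⁻¹ * R * Q⁻¹ with hXdef
  have hX : X.PosDef := posDef_conj hR hQinvdet hQIH
  -- B⁻¹
  have hBinv : B⁻¹ = ((n:ℂ)) • C⁻¹ := by
    apply Matrix.inv_eq_left_inv
    rw [hBdef, Matrix.smul_mul, Matrix.mul_smul, smul_smul, Matrix.nonsing_inv_mul _ hCdetU]
    have : ((n:ℂ)) * ((r:ℝ):ℂ) = 1 := by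
      rw [hrdef]
      push_cast
      field_simp
    rw [this, one_smul]
  -- D⁻¹
  have hDinv : D⁻¹ = (1 : Matrix (Fin n) (Fin n) ℂ) ⊗ₖ B⁻¹ := by
    apply Matrix.inv_eq_left_inv
    rw [hDdef, ← mul_kronecker_mul, Matrix.one_mul, Matrix.nonsing_inv_mul _ hBdetU,
      one_kronecker_one]
  -- trace of X
  have htrX : X.trace = ((n * k : ℝ) : ℂ) := by
    rw [hXdef, trace_mul_cycle, ← Matrix.mul_inv_rev, hQ2, hDinv, trace_kron_mul, hBinv,
      Matrix.smul_mul, trace_smul, ← hCdef, Matrix.nonsing_inv_mul _ hCdetU, trace_one]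
    push_cast
    simp [Fintype.card_fin, mul_comm]
  -- determinant of D
  have hdetD : D.det = (((r ^ k * c₀) ^ n : ℝ) : ℂ) := by
    rw [hDdef, det_kronecker, det_one, one_pow, one_mul, hBdef, det_smul, hCdet]
    push_cast
    simp [Fintype.card_fin]
  have hδ : (0:ℝ) < (r ^ k * c₀) ^ n := by positivity
  -- determinant of X
  obtain ⟨hρ, hRdet⟩ := posDef_det_re hR
  set ρ := R.det.re
  have hQQ : Q.det * Q.det = D.det := by rw [← det_mul, hQ2]
  have hdetX : X.det = ((ρ / (r ^ k * c₀) ^ n : ℝ) : ℂ) := by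
    rw [hXdef, det_mul, det_mul, Matrix.det_nonsing_inv, Ring.inverse_eq_inv']
    have h2 : (Q.det)⁻¹ * R.det * (Q.det)⁻¹ = R.det * (Q.det * Q.det)⁻¹ := by
      rw [mul_inv]
      ring
    rw [h2, hQQ, hdetD, hRdet, ← Complex.ofReal_inv, ← Complex.ofReal_mul, ← div_eq_mul_inv]
  have hXre : X.det.re = ρ / (r ^ k * c₀) ^ n := by rw [hdetX, Complex.ofReal_re]
  have hcard : Fintype.card (Fin n × Fin k) = n * k := by simp
  have hmain := det_le_exp_trace hX
  rw [hXre, htrX, Complex.ofReal_re, hcard] at hmain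
  have h1 : ρ / (r ^ k * c₀) ^ n ≤ 1 := by
    have : ((n * k : ℝ) - (n * k : ℕ) : ℝ) = 0 := by push_cast; ring
    rw [this, Real.exp_zero] at hmain
    exact hmain
  have hρδ : ρ ≤ (r ^ k * c₀) ^ n := (div_le_one hδ).mp h1
  have heq : (r ^ k * c₀) ^ n = (c₀ / (n : ℝ) ^ k) ^ n := by
    congr 1
    rw [hrdef, inv_pow]
    field_simp
  rw [← heq]
  exact hρδ

lemma dot_self_pos {I : Type*} [Fintype I] {x : I → ℂ} (hx : x ≠ 0) :
    ∃ c : ℝ, 0 < c ∧ star x ⬝ᵥ x = (c : ℂ) := by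
  have hw0 : 0 ≤ star x ⬝ᵥ x := dotProduct_star_self_nonneg x
  have hwne : star x ⬝ᵥ x ≠ 0 := fun h => hx (dotProduct_star_self_eq_zero.mp h)
  obtain ⟨h1, h2⟩ := Complex.le_def.mp hw0
  have him : (star x ⬝ᵥ x).im = 0 := by simpa using h2.symm
  refine ⟨(star x ⬝ᵥ x).re, ?_, Complex.ext rfl (by simp [him])⟩
  rcases lt_or_eq_of_le (by simpa using h1) with h | h
  · exact h
  · exact absurd (Complex.ext h.symm him) hwne

lemma sector_quadratic {I : Type*} [Fintype I] {α : ℝ} (A : Matrix I I ℂ)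
    (hA : numRange A ⊆ sector α) {x : I → ℂ} (hx : x ≠ 0) :
    0 < (star x ⬝ᵥ (A *ᵥ x)).re ∧
      |(star x ⬝ᵥ (A *ᵥ x)).im| ≤ (star x ⬝ᵥ (A *ᵥ x)).re * Real.tan α := by
  obtain ⟨c, hc, hcx⟩ := dot_self_pos hx
  set t : ℝ := (Real.sqrt c)⁻¹ with ht
  set y : I → ℂ := ((t : ℂ)) • x with hy
  have hstar : star y = ((t : ℂ)) • star x := by
    rw [hy, star_smul]
    congr 1
    simp [Complex.ext_iff]
  have ht2 : (t : ℝ) ^ 2 = c⁻¹ := by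
    rw [ht, inv_pow, Real.sq_sqrt hc.le]
  have htt : (t : ℂ) * (t : ℂ) = ((c⁻¹ : ℝ) : ℂ) := by
    rw [← Complex.ofReal_mul]
    norm_cast
    rw [← ht2]
    ring
  have hyy : star y ⬝ᵥ y = 1 := by
    rw [hy, hstar, smul_dotProduct, dotProduct_smul, hcx, smul_eq_mul, smul_eq_mul,
      ← mul_assoc, htt, ← Complex.ofReal_mul]
    norm_cast
    field_simp
  have hyA : star y ⬝ᵥ (A *ᵥ y) = ((c⁻¹ : ℝ) : ℂ) * (star x ⬝ᵥ (A *ᵥ x)) := by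
    rw [hy, hstar, mulVec_smul, smul_dotProduct, dotProduct_smul, smul_eq_mul, smul_eq_mul,
      ← mul_assoc, htt]
  have hmem : ((c⁻¹ : ℝ) : ℂ) * (star x ⬝ᵥ (A *ᵥ x)) ∈ sector α := hA ⟨y, hyy, hyA⟩
  obtain ⟨hre, him⟩ := hmem
  set z := star x ⬝ᵥ (A *ᵥ x) with hz
  simp only [Complex.mul_re, Complex.mul_im, Complex.ofReal_re, Complex.ofReal_im,
    zero_mul, mul_zero, sub_zero, add_zero, zero_add] at hre him
  have hzre : 0 < z.re := by
    have h := mul_pos hc hre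
    rwa [← mul_assoc, mul_inv_cancel₀ hc.ne', one_mul] at h
  refine ⟨hzre, ?_⟩
  have hinv : (0:ℝ) < c⁻¹ := inv_pos.mpr hc
  have him' : c⁻¹ * |z.im| ≤ c⁻¹ * (z.re * Real.tan α) := by
    calc c⁻¹ * |z.im| = |c⁻¹ * z.im| := by rw [abs_mul, abs_of_pos hinv]
      _ ≤ c⁻¹ * z.re * Real.tan α := him
      _ = c⁻¹ * (z.re * Real.tan α) := by ring
  exact le_of_mul_le_mul_left him' hinv

/-- Theorem 3.6: |det(tr₁H)/n^k|^n ≥ (cos α)^{nk} |det H| for sector matrices. -/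
theorem stmt4 {n k : ℕ} (hn : 0 < n) (hk : 0 < k) {α : ℝ}
    (hα0 : 0 ≤ α) (hα : α < Real.pi / 2)
    (H : Matrix (Fin n × Fin k) (Fin n × Fin k) ℂ)
    (hH : numRange H ⊆ sector α) :
    (‖(ptrace1 H).det‖ / (n : ℝ) ^ k) ^ n ≥
      Real.cos α ^ (n * k) * ‖H.det‖ := by
  classical
  have hsec := fun (x : (Fin n × Fin k) → ℂ) (hx : x ≠ 0) => sector_quadratic H hH hx
  set R := ReM H with hRdef
  have hR : R.PosDef := posDef_ReM H (fun x hx => (hsec x hx).1)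
  obtain ⟨hρ, hRdet⟩ := posDef_det_re hR
  set ρ := R.det.re with hρdef
  have hcos : 0 < Real.cos α :=
    Real.cos_pos_of_mem_Ioo ⟨by linarith [Real.pi_pos], hα⟩
  obtain ⟨μ, hdet1, hwit1⟩ := decomp H hR
  have hμ : ∀ j, |μ j| ≤ Real.tan α := by
    intro j
    obtain ⟨x, hx, c, hc, hz⟩ := hwit1 j
    have h := (hsec x hx).2
    rw [hz] at h
    simp only [Complex.mul_re, Complex.mul_im, Complex.add_re, Complex.add_im, Complex.one_re,
      Complex.one_im, Complex.mul_re, Complex.mul_im, Complex.I_re, Complex.I_im,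
      Complex.ofReal_re, Complex.ofReal_im, mul_zero, mul_one, zero_mul, sub_zero, add_zero,
      zero_add, zero_sub] at h
    rw [abs_mul, abs_of_pos hc] at h
    exact le_of_mul_le_mul_left h hc
  have htan : ∀ j, Real.sqrt (1 + μ j ^ 2) ≤ (Real.cos α)⁻¹ := by
    intro j
    have h1 : μ j ^ 2 ≤ Real.tan α ^ 2 := by
      obtain ⟨ha, hb⟩ := abs_le.mp (hμ j)
      exact sq_le_sq' ha hb
    have h2 : (Real.cos α)⁻¹ = Real.sqrt (1 + Real.tan α ^ 2) := by
      rw [← Real.inv_sqrt_one_add_tan_sq hcos, inv_inv]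
    rw [h2]
    exact Real.sqrt_le_sqrt (by linarith)
  have hcard : Fintype.card (Fin n × Fin k) = n * k := by simp
  have habsR : ‖R.det‖ = ρ := by
    rw [hRdet, Complex.norm_real, Real.norm_eq_abs, abs_of_pos hρ]
  have habsH : ‖H.det‖ ≤ ((Real.cos α)⁻¹) ^ (n * k) * ρ := by
    rw [hdet1, ← hRdef, habsR]
    have hprod : (∏ j, Real.sqrt (1 + μ j ^ 2)) ≤ ((Real.cos α)⁻¹) ^ (n * k) := by
      calc (∏ j, Real.sqrt (1 + μ j ^ 2)) ≤ ∏ _j : Fin n × Fin k, (Real.cos α)⁻¹ :=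
            Finset.prod_le_prod (fun j _ => Real.sqrt_nonneg _) (fun j _ => htan j)
        _ = ((Real.cos α)⁻¹) ^ (n * k) := by rw [Finset.prod_const, Finset.card_univ, hcard]
    exact mul_le_mul_of_nonneg_right hprod hρ.le
  -- ptrace part
  set P := ptrace1 H with hPdef
  have hReP : ReM P = ptrace1 R := ReM_ptrace1 H
  have hCP : (ReM P).PosDef := by rw [hReP]; exact ptrace1_posDef hn hR
  obtain ⟨hc₀, hCdet⟩ := posDef_det_re hCP
  set c₀ := (ReM P).det.re with hc₀def
  have habsC : ‖(ReM P).det‖ = c₀ := by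
    rw [hCdet, Complex.norm_real, Real.norm_eq_abs, abs_of_pos hc₀]
  obtain ⟨ν, hdet2, _⟩ := decomp P hCP
  have hc₀le : c₀ ≤ ‖P.det‖ := by
    rw [hdet2, habsC]
    have hone : (1:ℝ) ≤ ∏ j, Real.sqrt (1 + ν j ^ 2) := by
      have h1 : ∀ j : Fin k, (1:ℝ) ≤ Real.sqrt (1 + ν j ^ 2) := by
        intro j
        have h2 := Real.sqrt_le_sqrt (show (1:ℝ) ≤ 1 + ν j ^ 2 by nlinarith [sq_nonneg (ν j)])
        rwa [Real.sqrt_one] at h2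
      calc (1:ℝ) = ∏ _j : Fin k, 1 := by simp
        _ ≤ ∏ j, Real.sqrt (1 + ν j ^ 2) :=
            Finset.prod_le_prod (fun j _ => zero_le_one) (fun j _ => h1 j)
    nlinarith
  have hstep3 : ρ ≤ (c₀ / (n : ℝ) ^ k) ^ n := by
    have h := step3 hn hR
    rw [← hReP] at h
    exact h
  -- final chain
  have hnk : (0:ℝ) < (n : ℝ) ^ k := by positivity
  have h5 : Real.cos α ^ (n * k) * ‖H.det‖ ≤ ρ := by
    calc Real.cos α ^ (n * k) * ‖H.det‖
        ≤ Real.cos α ^ (n * k) * (((Real.cos α)⁻¹) ^ (n * k) * ρ) :=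
          mul_le_mul_of_nonneg_left habsH (by positivity)
      _ = ρ := by
          rw [← mul_assoc, ← mul_pow, mul_inv_cancel₀ hcos.ne', one_pow, one_mul]
  have h6 : ρ ≤ (‖P.det‖ / (n : ℝ) ^ k) ^ n := by
    refine le_trans hstep3 (pow_le_pow_left₀ (by positivity) ?_ n)
    exact (div_le_div_iff_of_pos_right hnk).mpr hc₀le
  exact le_trans h5 h6
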